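/- Let H be a Poisson superalgebra and P₁ a Poisson superalgebra with Kantor double J₁ = Kan(P₁). Then there is a vector space isomorphism Kan(H ⊗ P₁) ≅ H ⊗ J₁ under which the Kantor product takes the form (x⊗f)•(y⊗g) = (-1)^{|f||y|}( x·y ⊗ f∘g + (-1)^{|f|+1} {x,y} ⊗ D(f)∘D(g) ), where ∘ is the Jordan product of J₁ and D is the canonical odd superderivation of J₁. -/

import Mathlib

noncomputable section

/-- The sign `(-1)^i` for `i : ZMod 2`. -/
def sgn (K : Type) [Field K] (i : ZMod 2) : K := if i = 0 then 1 else -1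

variable (K : Type) [Field K]

variable {V : Type} [AddCommGroup V] [Module K V]

/-- The linear span of all products `μ a b` with `a ∈ S`, `b ∈ T`. -/
def mulSpan (μ : V →ₗ[K] V →ₗ[K] V) (S T : Submodule K V) : Submodule K V :=
  Submodule.span K {w | ∃ a ∈ S, ∃ b ∈ T, w = μ a b}

/-- A two-sided ideal of a (nonassociative) algebra with product `μ`. -/
def IsIdeal (μ : V →ₗ[K] V →ₗ[K] V) (I : Submodule K V) : Prop :=
  ∀ a : V, ∀ b ∈ I, μ a b ∈ I ∧ μ b a ∈ I

/-- The product respects the `ZMod 2`-grading. -/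
def GradedMul (g : ZMod 2 → Submodule K V) (μ : V →ₗ[K] V →ₗ[K] V) : Prop :=
  ∀ i j : ZMod 2, ∀ a ∈ g i, ∀ b ∈ g j, μ a b ∈ g (i + j)

/-- Supercommutativity: `a b = (-1)^{|a||b|} b a` on homogeneous elements. -/
def SuperComm (g : ZMod 2 → Submodule K V) (μ : V →ₗ[K] V →ₗ[K] V) : Prop :=
  ∀ i j : ZMod 2, ∀ a ∈ g i, ∀ b ∈ g j, μ a b = sgn K (i * j) • μ b a

/-- The linearized super Jordan identity on homogeneous elements. -/
def SuperJordan (g : ZMod 2 → Submodule K V) (μ : V →ₗ[K] V →ₗ[K] V) : Prop :=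
  ∀ ia ib ic id : ZMod 2, ∀ a ∈ g ia, ∀ b ∈ g ib, ∀ c ∈ g ic, ∀ d ∈ g id,
    μ (μ a b) (μ c d) + sgn K (ib * ic) • μ (μ a c) (μ b d)
        + sgn K ((ib + ic) * id) • μ (μ a d) (μ b c)
      = μ (μ (μ a b) c) d + sgn K (ib * (ic + id) + ic * id) • μ (μ (μ a d) c) b
        + sgn K (ia * (ib + ic + id) + ic * id) • μ (μ (μ b d) c) a

/-- A `ZMod 2`-graded algebra which is a Jordan superalgebra. -/
structure IsJordanSuper (g : ZMod 2 → Submodule K V) (μ : V →ₗ[K] V →ₗ[K] V) : Prop where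
  internal : DirectSum.IsInternal g
  graded : GradedMul K g μ
  comm : SuperComm K g μ
  jordan : SuperJordan K g μ

/-- A `ZMod 2`-graded algebra which is a Lie superalgebra. -/
structure IsLieSuper (g : ZMod 2 → Submodule K V) (br : V →ₗ[K] V →ₗ[K] V) : Prop where
  internal : DirectSum.IsInternal g
  graded : GradedMul K g br
  anti : ∀ i j : ZMod 2, ∀ x ∈ g i, ∀ y ∈ g j, br x y = -(sgn K (i * j)) • br y x
  jacobi : ∀ i j k : ZMod 2, ∀ x ∈ g i, ∀ y ∈ g j, ∀ z ∈ g k,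
    br x (br y z) = br (br x y) z + sgn K (i * j) • br y (br x z)

/-- A Poisson superalgebra structure: a supercommutative associative unital product `m`
and a super Lie bracket `p` related by the super Leibniz rule. -/
structure IsPoissonSuper (g : ZMod 2 → Submodule K V)
    (m p : V →ₗ[K] V →ₗ[K] V) (e : V) : Prop where
  internal : DirectSum.IsInternal g
  m_graded : GradedMul K g m
  assoc : ∀ a b c : V, m (m a b) c = m a (m b c)
  e_mem : e ∈ g 0
  one_mul : ∀ a : V, m e a = a
  mul_one : ∀ a : V, m a e = a
  comm : SuperComm K g m
  p_graded : GradedMul K g p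
  anti : ∀ i j : ZMod 2, ∀ x ∈ g i, ∀ y ∈ g j, p x y = -(sgn K (i * j)) • p y x
  jacobi : ∀ i j k : ZMod 2, ∀ x ∈ g i, ∀ y ∈ g j, ∀ z ∈ g k,
    p x (p y z) = p (p x y) z + sgn K (i * j) • p y (p x z)
  leibniz : ∀ j k : ZMod 2, ∀ a : V, ∀ b ∈ g j, ∀ c ∈ g k,
    p (m a b) c = m a (p b c) + sgn K (j * k) • m (p a c) b

/-- The `ZMod 2`-grading of the Kantor double `A ⊕ Ā`: the degree-`i` part is
`A_i ⊕ (Ā)_i` where `(Ā)_i = A_{i+1}` (i.e. `|ā| = 1 - |a|`). -/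
def kanGrading (g : ZMod 2 → Submodule K V) : ZMod 2 → Submodule K (V × V) :=
  fun i => (g i).prod (g (i + 1))

/-- The defining multiplication rules of the Kantor double `Kan(A) = A ⊕ Ā` of a
Poisson superalgebra `(A, m, p)`: `a•b = ab`, `a•b̄ = (ab)‾`, `ā•b = (-1)^{|b|}(ab)‾`,
`ā•b̄ = (-1)^{|b|}{a,b}`; an element `(a, b) : V × V` represents `a + b̄`. -/
structure KantorRules (g : ZMod 2 → Submodule K V) (m p : V →ₗ[K] V →ₗ[K] V)
    (μ : V × V →ₗ[K] V × V →ₗ[K] V × V) : Prop where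
  plain_plain : ∀ a b : V, μ (a, 0) (b, 0) = (m a b, 0)
  plain_bar : ∀ a b : V, μ (a, 0) (0, b) = (0, m a b)
  bar_plain : ∀ a : V, ∀ j : ZMod 2, ∀ b ∈ g j, μ (0, a) (b, 0) = (0, sgn K j • m a b)
  bar_bar : ∀ a : V, ∀ j : ZMod 2, ∀ b ∈ g j, μ (0, a) (0, b) = (sgn K j • p a b, 0)

/-- The unit `1` of the Jordan double `Jor(L) = ⟨1⟩ ⊕ L ⊕ ⟨1̄⟩ ⊕ L̄`; an element
`((α, x), (β, y))` of the carrier `(K × V) × (K × V)` represents `α1 + x + β1̄ + ȳ`. -/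
def jOne (V : Type) [AddCommGroup V] [Module K V] : (K × V) × (K × V) := ((1, 0), (0, 0))

/-- The odd element `1̄` of the Jordan double `Jor(L)`. -/
def jBarOne (V : Type) [AddCommGroup V] [Module K V] : (K × V) × (K × V) := ((0, 0), (1, 0))

/-- The embedding `L → Jor(L)`, `x ↦ x`. -/
def inclL (V : Type) [AddCommGroup V] [Module K V] : V →ₗ[K] (K × V) × (K × V) :=
  (LinearMap.inl K (K × V) (K × V)).comp (LinearMap.inr K K V)

/-- The embedding `L → Jor(L)`, `x ↦ x̄`. -/
def inclLBar (V : Type) [AddCommGroup V] [Module K V] : V →ₗ[K] (K × V) × (K × V) :=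
  (LinearMap.inr K (K × V) (K × V)).comp (LinearMap.inr K K V)

/-- The `ZMod 2`-grading of `Jor(L)`: even part `⟨1⟩ ⊕ L₀ ⊕ L̄₁`, odd part `L₁ ⊕ ⟨1̄⟩ ⊕ L̄₀`
(recall `|x̄| = 1 - |x|` and `1̄` is odd). -/
def jorGrading (g : ZMod 2 → Submodule K V) : ZMod 2 → Submodule K ((K × V) × (K × V)) :=
  fun i =>
    ((if i = 0 then (⊤ : Submodule K K) else ⊥).prod (g i)).prod
      ((if i = 0 then (⊥ : Submodule K K) else ⊤).prod (g (i + 1)))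

/-- The defining multiplication rules of the Jordan double `Jor(L)` of a Lie
superalgebra `(L, [,])`: `1` is the unit, `x̄ • ȳ = [x,y]`, `x • 1̄ = x̄`,
`1̄ • x = (-1)^{|x|} x̄`, and all other products of `1, L, 1̄, L̄` vanish. -/
structure JorRules (g : ZMod 2 → Submodule K V) (br : V →ₗ[K] V →ₗ[K] V)
    (μ : (K × V) × (K × V) →ₗ[K] (K × V) × (K × V) →ₗ[K] (K × V) × (K × V)) : Prop where
  one_mul : ∀ w, μ (jOne K V) w = w
  mul_one : ∀ w, μ w (jOne K V) = w
  l_l : ∀ x y : V, μ (inclL K V x) (inclL K V y) = 0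
  l_lbar : ∀ x y : V, μ (inclL K V x) (inclLBar K V y) = 0
  lbar_l : ∀ x y : V, μ (inclLBar K V x) (inclL K V y) = 0
  lbar_lbar : ∀ x y : V, μ (inclLBar K V x) (inclLBar K V y) = inclL K V (br x y)
  l_obar : ∀ x : V, μ (inclL K V x) (jBarOne K V) = inclLBar K V x
  obar_l : ∀ i : ZMod 2, ∀ x ∈ g i,
    μ (jBarOne K V) (inclL K V x) = sgn K i • inclLBar K V x
  obar_obar : μ (jBarOne K V) (jBarOne K V) = 0
  obar_lbar : ∀ x : V, μ (jBarOne K V) (inclLBar K V x) = 0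
  lbar_obar : ∀ x : V, μ (inclLBar K V x) (jBarOne K V) = 0

/-- An algebra `(V, μ)` is just infinite if it is infinite-dimensional and every
nonzero ideal has finite codimension. -/
def JustInfinite (μ : V →ₗ[K] V →ₗ[K] V) : Prop :=
  ¬ FiniteDimensional K V ∧
    ∀ I : Submodule K V, IsIdeal K μ I → I ≠ ⊥ → FiniteDimensional K (V ⧸ I)

end
open TensorProduct in
/-- Let `H` be a Poisson superalgebra and `P₁` a Poisson
superalgebra with Kantor double `J₁ = Kan(P₁)`.  Under the vector space
isomorphism `Kan(H ⊗ P₁) ≅ H ⊗ J₁` (given by `TensorProduct.prodRight`), the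
Kantor product of `Kan(H ⊗ P₁)` takes the form
`(x⊗f)•(y⊗g) = (-1)^{|f||y|}( x·y ⊗ f∘g + (-1)^{|f|+1} {x,y} ⊗ D(f)∘D(g) )`,
where `∘` is the Jordan product of `J₁` and `D` is the canonical odd
superderivation of `J₁`. -/
theorem kantor_double_of_tensor_poisson
    (K : Type) [Field K] (hchar : (2 : K) ≠ 0)
    {H : Type} [AddCommGroup H] [Module K H]
    {P₁ : Type} [AddCommGroup P₁] [Module K P₁]
    (gH : ZMod 2 → Submodule K H) (mH pH : H →ₗ[K] H →ₗ[K] H) (eH : H)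
    (hH : IsPoissonSuper K gH mH pH eH)
    (g1 : ZMod 2 → Submodule K P₁) (m1 p1 : P₁ →ₗ[K] P₁ →ₗ[K] P₁) (e1 : P₁)
    (hP1 : IsPoissonSuper K g1 m1 p1 e1)
    -- the Kantor double `J₁ = Kan(P₁)` with Jordan product `μ1`
    (μ1 : P₁ × P₁ →ₗ[K] P₁ × P₁ →ₗ[K] P₁ × P₁)
    (hμ1 : KantorRules K g1 m1 p1 μ1)
    -- the canonical odd superderivation `D` of `J₁`
    (D : P₁ × P₁ →ₗ[K] P₁ × P₁)
    (hD_plain : ∀ a : P₁, D (a, 0) = 0)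
    (hD_bar : ∀ i : ZMod 2, ∀ a ∈ g1 i, D (0, a) = (sgn K i • a, 0))
    -- the tensor product Poisson superalgebra `T = H ⊗ P₁`
    (mT pT : H ⊗[K] P₁ →ₗ[K] H ⊗[K] P₁ →ₗ[K] H ⊗[K] P₁)
    (hmT : ∀ (jv jb : ZMod 2), ∀ a : H, ∀ v ∈ g1 jv, ∀ b ∈ gH jb, ∀ w : P₁,
      mT (a ⊗ₜ[K] v) (b ⊗ₜ[K] w) = sgn K (jv * jb) • (mH a b ⊗ₜ[K] m1 v w))
    (hpT : ∀ (jv jb : ZMod 2), ∀ a : H, ∀ v ∈ g1 jv, ∀ b ∈ gH jb, ∀ w : P₁,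
      pT (a ⊗ₜ[K] v) (b ⊗ₜ[K] w)
        = sgn K (jv * jb) • (pH a b ⊗ₜ[K] m1 v w + mH a b ⊗ₜ[K] p1 v w))
    -- the Kantor double `Kan(H ⊗ P₁)` with Kantor product `μT`
    (μT : (H ⊗[K] P₁) × (H ⊗[K] P₁) →ₗ[K] (H ⊗[K] P₁) × (H ⊗[K] P₁)
            →ₗ[K] (H ⊗[K] P₁) × (H ⊗[K] P₁))
    (hμT : KantorRules K
      (fun i => ⨆ j : ZMod 2,
        Submodule.map₂ (TensorProduct.mk K H P₁) (gH j) (g1 (i - j)))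
      mT pT μT) :
    ∀ (jf jy : ZMod 2), ∀ x : H, ∀ f ∈ kanGrading K g1 jf, ∀ y ∈ gH jy,
      ∀ gg : P₁ × P₁,
        μT ((TensorProduct.prodRight K K H P₁ P₁) (x ⊗ₜ[K] f))
            ((TensorProduct.prodRight K K H P₁ P₁) (y ⊗ₜ[K] gg))
          = (TensorProduct.prodRight K K H P₁ P₁)
              (sgn K (jf * jy) • (mH x y ⊗ₜ[K] μ1 f gg)
                + (sgn K (jf * jy) * sgn K (jf + 1))
                    • (pH x y ⊗ₜ[K] μ1 (D f) (D gg))) := by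
  intro jf jy x f hf y hy gg
  obtain ⟨f1, f2⟩ := f
  simp only [kanGrading, Submodule.mem_prod] at hf
  obtain ⟨hf1, hf2⟩ := hf
  have hcases : ∀ i : ZMod 2, i = 0 ∨ i = 1 := by decide
  have h11 : (1 + 1 : ZMod 2) = 0 := by decide
  have s0 : sgn K (0 : ZMod 2) = 1 := by simp [sgn]
  have s1 : sgn K (1 : ZMod 2) = -1 := by simp [sgn]
  -- membership of homogeneous tensors in the grading of `T = H ⊗ P₁`
  have hmemT : ∀ (jg : ZMod 2) (w : P₁), w ∈ g1 jg →
      y ⊗ₜ[K] w ∈ (⨆ j : ZMod 2,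
        Submodule.map₂ (TensorProduct.mk K H P₁) (gH j) (g1 (jy + jg - j))) := by
    intro jg w hw
    refine le_iSup
      (fun j => Submodule.map₂ (TensorProduct.mk K H P₁) (gH j) (g1 (jy + jg - j))) jy ?_
    refine Submodule.apply_mem_map₂ _ hy ?_
    simpa using hw
  have hDf : D (f1, f2) = (sgn K (jf + 1) • f2, 0) := by
    have hsplit : ((f1, f2) : P₁ × P₁) = (f1, 0) + (0, f2) := by simp
    rw [hsplit, map_add, hD_plain, hD_bar (jf + 1) f2 hf2, zero_add]
  -- the two sides as linear maps in `gg`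
  set L : P₁ × P₁ →ₗ[K] (H ⊗[K] P₁) × (H ⊗[K] P₁) :=
    (μT ((TensorProduct.prodRight K K H P₁ P₁) (x ⊗ₜ[K] (f1, f2)))).comp
      ((TensorProduct.prodRight K K H P₁ P₁).toLinearMap.comp
        (TensorProduct.mk K H (P₁ × P₁) y)) with hL
  set R : P₁ × P₁ →ₗ[K] (H ⊗[K] P₁) × (H ⊗[K] P₁) :=
    (TensorProduct.prodRight K K H P₁ P₁).toLinearMap.comp
      (sgn K (jf * jy) • ((TensorProduct.mk K H (P₁ × P₁) (mH x y)).comp (μ1 (f1, f2)))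
        + (sgn K (jf * jy) * sgn K (jf + 1)) •
            ((TensorProduct.mk K H (P₁ × P₁) (pH x y)).comp ((μ1 (D (f1, f2))).comp D)))
    with hR
  have happly : ∀ gg : P₁ × P₁,
      L gg = μT ((TensorProduct.prodRight K K H P₁ P₁) (x ⊗ₜ[K] (f1, f2)))
        ((TensorProduct.prodRight K K H P₁ P₁) (y ⊗ₜ[K] gg)) := fun _ => rfl
  have happlyR : ∀ gg : P₁ × P₁,
      R gg = (TensorProduct.prodRight K K H P₁ P₁)
        (sgn K (jf * jy) • (mH x y ⊗ₜ[K] μ1 (f1, f2) gg)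
          + (sgn K (jf * jy) * sgn K (jf + 1))
              • (pH x y ⊗ₜ[K] μ1 (D (f1, f2)) (D gg))) := fun _ => rfl
  rw [← happly gg, ← happlyR gg]
  -- the homogeneous cases
  have hv : ∀ (jg : ZMod 2), ∀ v ∈ g1 jg, L (v, 0) = R (v, 0) := by
    intro jg v hvm
    rw [happly, happlyR, hD_plain, map_zero, TensorProduct.tmul_zero, smul_zero, add_zero]
    have hμ1fv : μ1 (f1, f2) (v, 0) = (m1 f1 v, sgn K jg • m1 f2 v) := by
      have hsplit : ((f1, f2) : P₁ × P₁) = (f1, 0) + (0, f2) := by simp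
      rw [hsplit, map_add, LinearMap.add_apply, hμ1.plain_plain, hμ1.bar_plain f2 jg v hvm]
      simp
    have hLHS : μT (x ⊗ₜ[K] f1, x ⊗ₜ[K] f2) (y ⊗ₜ[K] v, 0)
        = (sgn K (jf * jy) • (mH x y ⊗ₜ[K] m1 f1 v),
           sgn K (jy + jg) • (sgn K ((jf + 1) * jy) • (mH x y ⊗ₜ[K] m1 f2 v))) := by
      have hs : ((x ⊗ₜ[K] f1, x ⊗ₜ[K] f2) : _ × _)
          = (x ⊗ₜ[K] f1, 0) + (0, x ⊗ₜ[K] f2) := by simp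
      rw [hs, map_add, LinearMap.add_apply, hμT.plain_plain,
        hμT.bar_plain (x ⊗ₜ[K] f2) (jy + jg) _ (hmemT jg v hvm),
        hmT jf jy x f1 hf1 y hy v, hmT (jf + 1) jy x f2 hf2 y hy v]
      simp
    rw [TensorProduct.prodRight_tmul, TensorProduct.prodRight_tmul,
      TensorProduct.tmul_zero, hLHS, hμ1fv, map_smul, TensorProduct.prodRight_tmul]
    rcases hcases jf with rfl | rfl <;> rcases hcases jy with rfl | rfl <;>
      rcases hcases jg with rfl | rfl <;>
      simp only [map_add, map_smul, TensorProduct.tmul_smul, TensorProduct.prodRight_tmul,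
        TensorProduct.tmul_zero, TensorProduct.tmul_add, smul_add, Prod.smul_mk,
        Prod.mk_add_mk, smul_zero, add_zero, zero_add, zero_mul, mul_zero, one_mul, mul_one,
        h11, s0, s1, Prod.mk.injEq] <;>
      constructor <;> first | module | trivial
  have hw : ∀ (jg : ZMod 2), ∀ w ∈ g1 jg, L (0, w) = R (0, w) := by
    intro jg w hwm
    rw [happly, happlyR]
    have hμ1fw : μ1 (f1, f2) (0, w) = (sgn K jg • p1 f2 w, m1 f1 w) := by
      have hsplit : ((f1, f2) : P₁ × P₁) = (f1, 0) + (0, f2) := by simp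
      rw [hsplit, map_add, LinearMap.add_apply, hμ1.plain_bar, hμ1.bar_bar f2 jg w hwm]
      simp
    have hDw : D (0, w) = (sgn K jg • w, 0) := hD_bar jg w hwm
    have hμ1D : μ1 (D (f1, f2)) (D (0, w))
        = (sgn K (jf + 1) * sgn K jg) • (m1 f2 w, (0 : P₁)) := by
      rw [hDf, hDw]
      have h1 : ((sgn K (jf + 1) • f2, (0 : P₁)) : P₁ × P₁)
          = sgn K (jf + 1) • ((f2, 0) : P₁ × P₁) := by simp
      have h2 : ((sgn K jg • w, (0 : P₁)) : P₁ × P₁)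
          = sgn K jg • ((w, 0) : P₁ × P₁) := by simp
      rw [h1, h2]
      simp only [map_smul, LinearMap.smul_apply, hμ1.plain_plain, smul_smul]
      rw [mul_comm (sgn K jg)]
    have hLHS : μT (x ⊗ₜ[K] f1, x ⊗ₜ[K] f2) (0, y ⊗ₜ[K] w)
        = (sgn K (jy + jg) • (sgn K ((jf + 1) * jy) •
             (pH x y ⊗ₜ[K] m1 f2 w + mH x y ⊗ₜ[K] p1 f2 w)),
           sgn K (jf * jy) • (mH x y ⊗ₜ[K] m1 f1 w)) := by
      have hs : ((x ⊗ₜ[K] f1, x ⊗ₜ[K] f2) : _ × _)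
          = (x ⊗ₜ[K] f1, 0) + (0, x ⊗ₜ[K] f2) := by simp
      rw [hs, map_add, LinearMap.add_apply, hμT.plain_bar,
        hμT.bar_bar (x ⊗ₜ[K] f2) (jy + jg) _ (hmemT jg w hwm),
        hmT jf jy x f1 hf1 y hy w, hpT (jf + 1) jy x f2 hf2 y hy w]
      simp
    rw [TensorProduct.prodRight_tmul, TensorProduct.prodRight_tmul,
      TensorProduct.tmul_zero, hLHS, hμ1fw, hμ1D]
    rcases hcases jf with rfl | rfl <;> rcases hcases jy with rfl | rfl <;>
      rcases hcases jg with rfl | rfl <;>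
      simp only [map_add, map_smul, TensorProduct.tmul_smul, TensorProduct.prodRight_tmul,
        TensorProduct.tmul_zero, TensorProduct.tmul_add, smul_add, Prod.smul_mk,
        Prod.mk_add_mk, smul_zero, add_zero, zero_add, zero_mul, mul_zero, one_mul, mul_one,
        h11, s0, s1, Prod.mk.injEq] <;>
      constructor <;> first | module | trivial
  -- general elements by linearity
  have hv' : ∀ v : P₁, L (v, 0) = R (v, 0) := by
    intro v
    have hmem : v ∈ ⨆ i, g1 i := hP1.internal.submodule_iSup_eq_top ▸ Submodule.mem_top
    refine Submodule.iSup_induction (motive := fun v => L (v, 0) = R (v, 0)) g1 hmem hv ?_ ?_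
    · show L (0, 0) = R (0, 0)
      rw [show ((0 : P₁), (0 : P₁)) = (0 : P₁ × P₁) from rfl, map_zero, map_zero]
    · intro a b ha hb
      show L (a + b, 0) = R (a + b, 0)
      have : ((a + b : P₁), (0 : P₁)) = ((a, 0) : P₁ × P₁) + (b, 0) := by simp
      rw [this, map_add, map_add, ha, hb]
  have hw' : ∀ w : P₁, L (0, w) = R (0, w) := by
    intro w
    have hmem : w ∈ ⨆ i, g1 i := hP1.internal.submodule_iSup_eq_top ▸ Submodule.mem_top
    refine Submodule.iSup_induction (motive := fun w => L (0, w) = R (0, w)) g1 hmem hw ?_ ?_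
    · show L (0, 0) = R (0, 0)
      rw [show ((0 : P₁), (0 : P₁)) = (0 : P₁ × P₁) from rfl, map_zero, map_zero]
    · intro a b ha hb
      show L (0, a + b) = R (0, a + b)
      have : ((0 : P₁), (a + b : P₁)) = ((0, a) : P₁ × P₁) + (0, b) := by simp
      rw [this, map_add, map_add, ha, hb]
  obtain ⟨gg1, gg2⟩ := gg
  have : ((gg1, gg2) : P₁ × P₁) = (gg1, 0) + (0, gg2) := by simp
  rw [this, map_add, map_add, hv' gg1, hw' gg2]
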